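/- Main theorem, part (b): Let r ∈ (0,1), λ > 0 with R = (r/(1-r))·e^λ > 1. Then the set Λ_R of pairs (x,y) ∈ (0,∞)² such that θ ↦ (1-r+r·e^θ)^x·(λ/(λ-θ))^y (θ < λ) is the Laplace transform of a probability measure on ℝ equals ℕ* × (0,∞), i.e., (x,y) ∈ Λ_R if and only if x is a positive integer. -/

import Mathlib

open MeasureTheory Real

section Aux
open ProbabilityTheory

lemma gamma_mgf {y l θ : ℝ} (hy : 0 < y) (hl : 0 < l) (hθ : θ < l) :
    ∫⁻ t, ENNReal.ofReal (Real.exp (θ * t)) ∂(gammaMeasure y l) =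
      ENNReal.ofReal ((l / (l - θ)) ^ y) := by
  have hlθ : 0 < l - θ := by linarith
  have hm : ∀ a b : ℝ, Measurable (gammaPDF a b) :=
    fun a b => (measurable_gammaPDFReal a b).ennreal_ofReal
  rw [gammaMeasure, lintegral_withDensity_eq_lintegral_mul _ (hm y l) (by fun_prop)]
  have key : ∀ t : ℝ, gammaPDF y l t * ENNReal.ofReal (Real.exp (θ * t)) =
      ENNReal.ofReal ((l / (l - θ)) ^ y) * gammaPDF y (l - θ) t := by
    intro t
    rcases le_or_gt 0 t with ht | ht
    · rw [gammaPDF_of_nonneg ht, gammaPDF_of_nonneg ht,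
        ← ENNReal.ofReal_mul (by positivity), ← ENNReal.ofReal_mul (by positivity)]
      congr 1
      rw [div_rpow hl.le hlθ.le]
      have hG : 0 < Real.Gamma y := Real.Gamma_pos_of_pos hy
      have hE : Real.exp (-(l*t)) * Real.exp (θ*t) = Real.exp (-((l-θ)*t)) := by
        rw [← Real.exp_add]; ring_nf
      have h2 : 0 < (l - θ) ^ y := Real.rpow_pos_of_pos hlθ _
      field_simp
      rw [mul_assoc, mul_comm t θ, hE, mul_comm (l - θ) t]
    · rw [gammaPDF_of_neg ht, gammaPDF_of_neg ht, zero_mul, mul_zero]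
  simp_rw [Pi.mul_apply, key]
  have h3 : ∫⁻ a, ENNReal.ofReal ((l/(l-θ))^y) * gammaPDF y (l-θ) a =
      ENNReal.ofReal ((l/(l-θ))^y) * ∫⁻ a, gammaPDF y (l-θ) a :=
    lintegral_const_mul' _ _ ENNReal.ofReal_ne_top
  rw [h3, lintegral_gammaPDF_eq_one hy hlθ, mul_one]

lemma construct {r l : ℝ} (hr : r ∈ Set.Ioo (0:ℝ) 1) (hl : 0 < l) (n : ℕ) {y : ℝ}
    (hy : 0 < y) :
    ∃ μ : Measure ℝ, IsProbabilityMeasure μ ∧ ∀ θ : ℝ, θ < l →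
      ∫⁻ t, ENNReal.ofReal (Real.exp (θ * t)) ∂μ =
        ENNReal.ofReal ((1 - r + r * Real.exp θ) ^ ((n:ℝ)) * (l / (l - θ)) ^ y) := by
  obtain ⟨hr0, hr1⟩ := hr
  have h1r : 0 < 1 - r := by linarith
  set w : ℕ → ℝ := fun k => (n.choose k) * r^k * (1-r)^(n-k) with hw
  have hwnn : ∀ k, 0 ≤ w k := fun k => by positivity
  have hwsum : ∀ c : ℝ, 0 ≤ c → ∑ k ∈ Finset.range (n+1), w k * c ^ k
      = (r * c + (1-r))^n := by
    intro c hc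
    rw [add_pow]
    refine Finset.sum_congr rfl fun k _ => ?_
    simp only [hw, mul_pow]
    ring
  set ν : Measure ℝ := ∑ k ∈ Finset.range (n+1),
    ENNReal.ofReal (w k) • Measure.dirac ((k:ℝ)) with hν
  haveI hνp : IsProbabilityMeasure ν := by
    constructor
    rw [hν, Measure.finset_sum_apply]
    simp only [Measure.smul_apply, measure_univ, smul_eq_mul, mul_one]
    rw [← ENNReal.ofReal_sum_of_nonneg (fun k _ => hwnn k)]
    have := hwsum 1 zero_le_one
    simp only [one_pow, mul_one] at this
    rw [this]
    norm_num
  haveI hγp : IsProbabilityMeasure (gammaMeasure y l) := isProbabilityMeasure_gammaMeasure hy hl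
  have hbin : ∀ θ : ℝ, ∫⁻ a, ENNReal.ofReal (Real.exp (θ * a)) ∂ν =
      ENNReal.ofReal ((1 - r + r * Real.exp θ)^n) := by
    intro θ
    rw [hν, lintegral_finset_sum_measure]
    simp only [lintegral_smul_measure]
    have : ∀ k : ℕ, ∫⁻ a, ENNReal.ofReal (Real.exp (θ * a)) ∂(Measure.dirac ((k:ℝ)))
        = ENNReal.ofReal (Real.exp θ ^ k) := by
      intro k
      rw [lintegral_dirac' _ (by fun_prop)]
      rw [← Real.exp_nat_mul]
      ring_nf
    simp only [this]
    simp only [smul_eq_mul, ← ENNReal.ofReal_mul (hwnn _)]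
    rw [← ENNReal.ofReal_sum_of_nonneg (fun k _ => by positivity)]
    rw [hwsum _ (Real.exp_pos θ).le]
    congr 1
    ring
  refine ⟨Measure.map (fun q : ℝ × ℝ => q.1 + q.2) (ν.prod (gammaMeasure y l)), ?_, ?_⟩
  · exact Measure.isProbabilityMeasure_map (by fun_prop)
  intro θ hθ
  rw [lintegral_map (by fun_prop) (by fun_prop)]
  rw [lintegral_prod _ (by fun_prop)]
  have inner : ∀ a : ℝ, ∫⁻ b, ENNReal.ofReal (Real.exp (θ * (a + b))) ∂(gammaMeasure y l)
      = ENNReal.ofReal (Real.exp (θ * a)) * ENNReal.ofReal ((l / (l - θ)) ^ y) := by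
    intro a
    have : ∀ b : ℝ, ENNReal.ofReal (Real.exp (θ * (a + b)))
        = ENNReal.ofReal (Real.exp (θ * a)) * ENNReal.ofReal (Real.exp (θ * b)) := by
      intro b
      rw [← ENNReal.ofReal_mul (by positivity), ← Real.exp_add]
      ring_nf
    simp only [this]
    rw [lintegral_const_mul' _ _ ENNReal.ofReal_ne_top, gamma_mgf hy hl hθ]
  simp only [inner]
  rw [lintegral_mul_const' _ _ ENNReal.ofReal_ne_top, hbin θ,
    ← ENNReal.ofReal_mul (by positivity)]
  congr 1
  rw [Real.rpow_natCast]

end Aux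

section Hard
open Complex Filter

set_option maxHeartbeats 2000000 in
lemma hard {r l x y : ℝ} (hr : r ∈ Set.Ioo (0:ℝ) 1) (hl : 0 < l)
    (hR : 1 < r / (1 - r) * Real.exp l) (hx : 0 < x) (hy : 0 < y)
    (μ : Measure ℝ) (hμ : IsProbabilityMeasure μ)
    (hL : ∀ θ : ℝ, θ < l → ∫⁻ t, ENNReal.ofReal (Real.exp (θ * t)) ∂μ =
      ENNReal.ofReal ((1 - r + r * Real.exp θ) ^ x * (l / (l - θ)) ^ y)) :
    ∃ n : ℕ, 0 < n ∧ x = (n : ℝ) := by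
  obtain ⟨hr0, hr1⟩ := hr
  have h1r : 0 < 1 - r := by linarith
  -- real integrability
  have hInt : ∀ c : ℝ, c < l → Integrable (fun t => Real.exp (c*t)) μ := by
    intro c hc
    refine ⟨Continuous.aestronglyMeasurable (by continuity), ?_⟩
    rw [hasFiniteIntegral_iff_norm]
    have h1 : ∀ t:ℝ, ENNReal.ofReal ‖Real.exp (c*t)‖ = ENNReal.ofReal (Real.exp (c*t)) := by
      intro t; rw [Real.norm_eq_abs, abs_of_pos (Real.exp_pos _)]
    simp only [h1]
    rw [hL c hc]; exact ENNReal.ofReal_lt_top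
  -- complex integrability
  have hIntC : ∀ z : ℂ, z.re < l → Integrable (fun t : ℝ => Complex.exp (z * t)) μ := by
    intro z hz
    refine (hInt z.re hz).mono (Continuous.aestronglyMeasurable (by continuity)) ?_
    filter_upwards with t
    simp [Complex.norm_exp, abs_of_pos (Real.exp_pos _), mul_comm]
  set S : Set ℂ := Complex.re ⁻¹' Set.Iio l with hS
  have hSopen : IsOpen S := (isOpen_Iio).preimage Complex.continuous_re
  have hSconv : Convex ℝ S := convex_halfSpace_re_lt l
  set F : ℂ → ℂ := fun z => ∫ t, Complex.exp (z * t) ∂μ with hF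
  -- derivative of F
  have hF_deriv : ∀ z : ℂ, z.re < l →
      HasDerivAt F (∫ t, (t : ℂ) * Complex.exp (z * t) ∂μ) z := by
    intro z hz
    set δ := (l - z.re)/4 with hδ
    have hδ0 : 0 < δ := by simp only [hδ]; linarith
    have key := hasDerivAt_integral_of_dominated_loc_of_deriv_le
      (F := fun (w : ℂ) (t : ℝ) => Complex.exp (w * t))
      (F' := fun (w : ℂ) (t : ℝ) => (t : ℂ) * Complex.exp (w * t)) (x₀ := z)
      (bound := fun t : ℝ => (1/δ) * (Real.exp ((z.re + 2*δ)*t) + 2*Real.exp (z.re*t)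
        + Real.exp ((z.re-2*δ)*t)))
      (Metric.ball_mem_nhds z hδ0) (.of_forall fun w => Continuous.aestronglyMeasurable (by continuity))
      (hIntC z hz) (Continuous.aestronglyMeasurable (by continuity)) ?_ ?_ ?_
    · exact key.2
    · refine .of_forall fun t => fun w hw => ?_
      have hre : |w.re - z.re| ≤ δ := by
        have := Complex.abs_re_le_norm (w - z)
        rw [Complex.sub_re] at this
        have h2 : ‖w - z‖ ≤ δ := by
          rw [← Complex.dist_eq]
          exact le_of_lt hw
        linarith [this.trans h2]
      have hre1 : w.re ≤ z.re + δ := by cases abs_le.mp hre; linarith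
      have hre2 : z.re - δ ≤ w.re := by cases abs_le.mp hre; linarith
      have hnorm : ‖(t : ℂ) * Complex.exp (w * t)‖ = |t| * Real.exp (w.re * t) := by
        simp [Complex.norm_exp, mul_comm]
      rw [hnorm]
      have hexp_le : Real.exp (w.re * t) ≤ Real.exp ((z.re+δ)*t) + Real.exp ((z.re-δ)*t) := by
        rcases le_or_gt 0 t with ht | ht
        · have : w.re * t ≤ (z.re+δ)*t := by nlinarith
          have := Real.exp_le_exp.mpr this
          linarith [(Real.exp_pos ((z.re-δ)*t))]
        · have : w.re * t ≤ (z.re-δ)*t := by nlinarith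
          have := Real.exp_le_exp.mpr this
          linarith [(Real.exp_pos ((z.re+δ)*t))]
      have habs : |t| ≤ (1/δ) * (Real.exp (δ*t) + Real.exp (-(δ*t))) := by
        have h3 : δ * |t| ≤ Real.exp (δ * |t|) := (Real.add_one_le_exp _).trans' (by linarith)
        have h4 : Real.exp (δ * |t|) ≤ Real.exp (δ*t) + Real.exp (-(δ*t)) := by
          rcases abs_cases t with ⟨he, _⟩ | ⟨he, _⟩
          · rw [he]; linarith [Real.exp_pos (-(δ*t))]
          · rw [he, mul_neg]; linarith [Real.exp_pos (δ*t)]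
        have h5 := h3.trans h4
        rw [div_mul_eq_mul_div, le_div_iff₀ hδ0]
        nlinarith
      have hb : |t| * Real.exp (w.re * t)
          ≤ ((1/δ) * (Real.exp (δ*t) + Real.exp (-(δ*t))))
            * (Real.exp ((z.re+δ)*t) + Real.exp ((z.re-δ)*t)) := by
        apply mul_le_mul habs hexp_le (Real.exp_pos _).le
        positivity
      refine hb.trans (le_of_eq ?_)
      show _ = 1/δ * (Real.exp ((z.re + 2*δ)*t) + 2*Real.exp (z.re*t) + Real.exp ((z.re-2*δ)*t))
      rw [mul_assoc]
      congr 1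
      simp only [add_mul, mul_add, ← Real.exp_add]
      ring_nf
    · have e1 := hInt (z.re + 2*δ) (by simp only [hδ]; linarith)
      have e2 := hInt z.re hz
      have e3 := hInt (z.re - 2*δ) (by simp only [hδ]; linarith)
      exact (((e1.add (e2.const_mul 2)).add e3).const_mul (1/δ))
    · refine .of_forall fun t => fun w _ => ?_
      have h5 : HasDerivAt (fun w : ℂ => w * t) (t : ℂ) w := by
        simpa using (hasDerivAt_id w).mul_const (t : ℂ)
      simpa [mul_comm] using h5.cexp

  have hFA : AnalyticOnNhd ℂ F S := by
    refine DifferentiableOn.analyticOnNhd (fun z hz => ?_) hSopen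
    exact (hF_deriv z hz).differentiableAt.differentiableWithinAt
  -- the auxiliary function G
  set E : ℂ → ℂ := fun z => Complex.exp ((y:ℂ) * Complex.log ((l:ℂ) - z)) with hE
  have hEA : AnalyticOnNhd ℂ E S := by
    intro z hz
    have hm : ((l:ℂ) - z) ∈ Complex.slitPlane := by
      left
      simp only [Complex.sub_re, Complex.ofReal_re]
      have : z.re < l := hz
      linarith
    exact (analyticAt_const.mul ((analyticAt_clog hm).comp
      (analyticAt_const.sub (analyticAt_id)))).cexp
  set G : ℂ → ℂ := fun z => F z * E z with hG
  have hGA : AnalyticOnNhd ℂ G S := hFA.mul hEA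
  -- value of G on the reals
  set g : ℝ → ℝ := fun θ => (1 - r + r * Real.exp θ) ^ x * l ^ y with hg
  have hbase : ∀ θ : ℝ, 0 < 1 - r + r * Real.exp θ := by
    intro θ; have := Real.exp_pos θ; positivity
  have hGreal : ∀ θ : ℝ, θ < l → G θ = (g θ : ℂ) := by
    intro θ hθ
    have hlθ : 0 < l - θ := by linarith
    have hFθ : F (θ:ℂ) = ((((1 - r + r * Real.exp θ) ^ x * (l / (l - θ)) ^ y) : ℝ) : ℂ) := by
      have h1 : ∀ t : ℝ, Complex.exp ((θ:ℂ) * t) = ((Real.exp (θ * t) : ℝ) : ℂ) := by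
        intro t; rw [Complex.ofReal_exp]; push_cast; ring_nf
      rw [hF]
      simp only [h1]
      have hreal : ∫ t, Real.exp (θ * t) ∂μ
          = (1 - r + r * Real.exp θ) ^ x * (l / (l - θ)) ^ y := by
        rw [integral_eq_lintegral_of_nonneg_ae (.of_forall fun t => (Real.exp_pos _).le)
          (Continuous.aestronglyMeasurable (by continuity)), hL θ hθ,
          ENNReal.toReal_ofReal (by positivity)]
      have h0 : ∫ t, ((Real.exp (θ*t) : ℝ) : ℂ) ∂μ
          = ((∫ t, Real.exp (θ*t) ∂μ : ℝ) : ℂ) := integral_ofReal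
      rw [h0, hreal]
    have hEθ : E (θ:ℂ) = (((l - θ) ^ y : ℝ) : ℂ) := by
      simp only [hE]
      have h2 : ((l:ℂ) - (θ:ℂ)) = ((l - θ : ℝ) : ℂ) := by push_cast; ring
      rw [h2, ← Complex.ofReal_log hlθ.le, ← Complex.ofReal_mul, ← Complex.ofReal_exp]
      congr 1
      rw [Real.rpow_def_of_pos hlθ, mul_comm]
    simp only [hG]
    rw [hFθ, hEθ, ← Complex.ofReal_mul]
    congr 1
    rw [hg, Real.div_rpow hl.le hlθ.le]
    field_simp
  -- derivative of G on the reals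
  set g' : ℝ → ℝ := fun θ =>
    (r * Real.exp θ) * x * (1 - r + r * Real.exp θ) ^ (x-1) * l ^ y with hg'
  have hgderiv : ∀ θ : ℝ, HasDerivAt g (g' θ) θ := by
    intro θ
    have h1 : HasDerivAt (fun s : ℝ => 1 - r + r * Real.exp s) (r * Real.exp θ) θ := by
      simpa using (Real.hasDerivAt_exp θ).const_mul r |>.const_add (1 - r)
    have h2 := h1.rpow_const (p := x) (Or.inl (hbase θ).ne')
    simpa [hg, hg', mul_comm, mul_assoc, mul_left_comm] using h2.mul_const (l ^ y)
  have hGderiv : ∀ θ : ℝ, θ < l → deriv G (θ:ℂ) = ((g' θ : ℝ) : ℂ) := by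
    intro θ hθ
    have hmem : (θ:ℂ) ∈ S := by simpa [hS] using hθ
    have hd : HasDerivAt G (deriv G (θ:ℂ)) (θ:ℂ) :=
      ((hGA _ hmem).differentiableAt).hasDerivAt
    have hd2 : HasDerivAt (fun s : ℝ => G (s:ℂ)) (deriv G (θ:ℂ)) θ := hd.comp_ofReal
    have heq : (fun s : ℝ => G (s:ℂ)) =ᶠ[nhds θ] (fun s : ℝ => ((g s : ℝ) : ℂ)) := by
      filter_upwards [eventually_lt_nhds hθ] with s hs
      exact hGreal s hs
    have hd3 : HasDerivAt (fun s : ℝ => ((g s : ℝ) : ℂ)) (deriv G (θ:ℂ)) θ :=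
      hd2.congr_of_eventuallyEq heq.symm
    have hd4 : HasDerivAt (fun s : ℝ => ((g s : ℝ) : ℂ)) ((g' θ : ℝ) : ℂ) θ :=
      (hgderiv θ).ofReal_comp
    exact hd3.unique hd4
  -- the analytic function D vanishing on the reals
  set D : ℂ → ℂ := fun z =>
    deriv G z * (1 - r + r * Complex.exp z) - (x:ℂ) * (r * Complex.exp z) * G z with hD
  have hDA : AnalyticOnNhd ℂ D S := by
    refine AnalyticOnNhd.sub (AnalyticOnNhd.mul (hGA.deriv) ?_) (AnalyticOnNhd.mul ?_ hGA)
    · exact fun z _ => (analyticAt_const.add (analyticAt_const.mul analyticAt_cexp))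
    · exact fun z _ => analyticAt_const.mul (analyticAt_const.mul analyticAt_cexp)
  have hDreal : ∀ θ : ℝ, θ < l → D (θ:ℂ) = 0 := by
    intro θ hθ
    rw [hD]
    simp only [hGderiv θ hθ, hGreal θ hθ]
    have h6 : (1 - r + r * Complex.exp (θ:ℂ) : ℂ) = ((1 - r + r * Real.exp θ : ℝ) : ℂ) := by
      push_cast [Complex.ofReal_exp]; ring
    rw [h6, ← Complex.ofReal_exp]
    push_cast
    rw [sub_eq_zero]
    norm_cast
    simp only [hg, hg']
    have hb := hbase θ
    have hpow : (1 - r + r * Real.exp θ) ^ (x-1) * (1 - r + r * Real.exp θ)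
        = (1 - r + r * Real.exp θ) ^ x := by
      nth_rewrite 2 [← Real.rpow_one (1 - r + r * Real.exp θ)]
      rw [← Real.rpow_add hb]
      norm_num
    linear_combination ((r * Real.exp θ) * x * l ^ y) * hpow

  -- D vanishes on all of S by the identity theorem
  have hDzero : Set.EqOn D 0 S := by
    refine hDA.eqOn_zero_of_preconnected_of_frequently_eq_zero
      (hSconv.isPreconnected) (z₀ := 0) (by simp [hS]; linarith) ?_
    have htend : Filter.Tendsto (fun n : ℕ => ((-(1:ℝ)/(n+1) : ℝ) : ℂ)) Filter.atTop
        (nhdsWithin 0 {z : ℂ | z ≠ 0}) := by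
      rw [tendsto_nhdsWithin_iff]
      constructor
      · have hh : Filter.Tendsto (fun n : ℕ => (-(1:ℝ)/(n+1) : ℝ)) Filter.atTop (nhds 0) := by
          have h := (tendsto_one_div_add_atTop_nhds_zero_nat (𝕜 := ℝ)).neg
          simp only [neg_zero] at h
          convert h using 2 with n
          ring
        have h2 := (Complex.continuous_ofReal.tendsto 0).comp hh
        exact h2
      · filter_upwards with n
        simp only [Set.mem_setOf_eq, ne_eq, Complex.ofReal_eq_zero]
        intro hcon
        rw [div_eq_zero_iff] at hcon
        rcases hcon with h | h
        · norm_num at h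
        · have : (0:ℝ) < n + 1 := by positivity
          linarith
    refine htend.frequently (Filter.Frequently.of_forall fun n => ?_)
    refine hDreal _ ?_
    have h1 : -(1:ℝ)/(n+1) < 0 := by
      apply div_neg_of_neg_of_pos
      · norm_num
      · positivity
    linarith
  -- the branch point z₀
  set z0 : ℂ := (Real.log ((1-r)/r) : ℂ) + (Real.pi : ℂ) * Complex.I with hz0
  have hz0re : z0.re = Real.log ((1-r)/r) := by
    simp [hz0]
  have hz0S : z0 ∈ S := by
    simp only [hS, Set.mem_preimage, Set.mem_Iio, hz0re]
    rw [Real.log_lt_iff_lt_exp (by positivity)]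
    rw [div_lt_iff₀ hr0]
    have h4 := mul_lt_mul_of_pos_right hR h1r
    rw [one_mul] at h4
    have h5 : r / (1 - r) * Real.exp l * (1 - r) = Real.exp l * r := by
      rw [mul_right_comm, div_mul_cancel₀ _ h1r.ne']
      ring
    linarith
  have hexpz0 : Complex.exp z0 = -(((1-r)/r : ℝ) : ℂ) := by
    rw [hz0, Complex.exp_add, Complex.exp_pi_mul_I, ← Complex.ofReal_exp,
      Real.exp_log (by positivity)]
    ring
  have hrexpz0 : (r:ℂ) * Complex.exp z0 = -(1-r : ℝ) := by
    rw [hexpz0]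
    have : (r:ℂ) ≠ 0 := by exact_mod_cast hr0.ne'
    push_cast
    field_simp
  have hφz0 : (1 - r + r * Complex.exp z0 : ℂ) = 0 := by
    rw [hrexpz0]; push_cast; ring
  have hrez0ne : (r:ℂ) * Complex.exp z0 ≠ 0 := by
    rw [hrexpz0]
    simp only [ne_eq, neg_eq_zero, Complex.ofReal_eq_zero]
    linarith
  have hxne : (x:ℂ) ≠ 0 := by exact_mod_cast hx.ne'
  -- G vanishes at z₀
  have hGz0 : G z0 = 0 := by
    have := hDzero hz0S
    simp only [hD, Pi.zero_apply] at this
    rw [hφz0, mul_zero, zero_sub, neg_eq_zero] at this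
    rcases mul_eq_zero.mp this with h | h
    · rcases mul_eq_zero.mp h with h' | h'
      · exact absurd h' hxne
      · exact absurd h' hrez0ne
    · exact h

  -- G is not identically zero
  have hG0ne : G 0 ≠ 0 := by
    have hexp1 : ∀ t : ℝ, Complex.exp ((0:ℂ) * t) = 1 := by
      intro t; rw [zero_mul, Complex.exp_zero]
    have hF0 : F 0 = 1 := by
      simp only [hF, hexp1, integral_const, measure_univ, probReal_univ, one_smul]
    simp only [hG, hF0, one_mul, hE]
    exact Complex.exp_ne_zero _
  have h0S : (0:ℂ) ∈ S := by
    simp only [hS, Set.mem_preimage, Set.mem_Iio, Complex.zero_re]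
    linarith
  have hGz0A : AnalyticAt ℂ G z0 := hGA z0 hz0S
  have hord_ne_top : analyticOrderAt G z0 ≠ ⊤ := by
    intro htop
    rw [analyticOrderAt_eq_top] at htop
    have := hGA.eqOn_zero_of_preconnected_of_eventuallyEq_zero hSconv.isPreconnected hz0S htop
    exact hG0ne (this h0S)
  obtain ⟨m, hm⟩ := WithTop.ne_top_iff_exists.mp hord_ne_top
  obtain ⟨u, huA, hu0, heqv⟩ := (hGz0A.analyticOrderAt_eq_natCast (n := m)).mp hm.symm
  have hm0 : 0 < m := by
    rcases Nat.eq_zero_or_pos m with h | h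
    · exfalso
      subst h
      have h9 := heqv.self_of_nhds
      simp only [pow_zero, one_smul] at h9
      exact hu0 (by rw [← h9, hGz0])
    · exact h
  obtain ⟨U, hUmem, hUA⟩ := huA.exists_mem_nhds_analyticOnNhd
  -- limit of the slope of φ
  have hφd : HasDerivAt (fun z : ℂ => 1 - (r:ℂ) + r * Complex.exp z)
      ((r:ℂ) * Complex.exp z0) z0 := by
    simpa using ((Complex.hasDerivAt_exp z0).const_mul (r:ℂ)).const_add (1 - (r:ℂ))
  have hslope := hasDerivAt_iff_tendsto_slope.mp hφd
  have hslope' : Filter.Tendsto (fun z : ℂ => (z - z0)⁻¹ * (1 - (r:ℂ) + r * Complex.exp z))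
      (nhdsWithin z0 {z | z ≠ z0}) (nhds ((r:ℂ) * Complex.exp z0)) := by
    apply hslope.congr
    intro z
    rw [slope_def_field, hφz0, sub_zero, div_eq_inv_mul]
  -- limit of the regular factor
  have hcont1 : Filter.Tendsto (fun z : ℂ => (m:ℂ) * u z + (z - z0) * deriv u z)
      (nhdsWithin z0 {z | z ≠ z0}) (nhds ((m:ℂ) * u z0)) := by
    have c1 : ContinuousAt u z0 := huA.continuousAt
    have c2 : ContinuousAt (deriv u) z0 :=
      ((hUA.deriv) z0 (mem_of_mem_nhds hUmem)).continuousAt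
    have c3 : ContinuousAt (fun z : ℂ => (m:ℂ) * u z + (z - z0) * deriv u z) z0 :=
      (continuousAt_const.mul c1).add ((continuousAt_id.sub continuousAt_const).mul c2)
    have c4 := c3.tendsto.mono_left (nhdsWithin_le_nhds (s := {z : ℂ | z ≠ z0}))
    simpa using c4
  have hB : Filter.Tendsto (fun z : ℂ => (x:ℂ) * ((r:ℂ) * Complex.exp z) * u z)
      (nhdsWithin z0 {z | z ≠ z0})
      (nhds ((x:ℂ) * ((r:ℂ) * Complex.exp z0) * u z0)) := by
    have c5 : ContinuousAt (fun z : ℂ => (x:ℂ) * ((r:ℂ) * Complex.exp z) * u z) z0 :=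
      (continuousAt_const.mul (continuousAt_const.mul
        Complex.continuous_exp.continuousAt)).mul huA.continuousAt
    exact c5.tendsto.mono_left nhdsWithin_le_nhds
  -- eventual equality of the two functions on the punctured neighbourhood
  have hudiff : ∀ᶠ w in nhds z0, DifferentiableAt ℂ u w := by
    filter_upwards [hUmem] with w hw
    exact (hUA w hw).differentiableAt
  have hDev : ∀ᶠ w in nhds z0, D w = 0 := by
    filter_upwards [hSopen.mem_nhds hz0S] with w hw
    exact hDzero hw
  have heqv' : G =ᶠ[nhds z0] (fun w : ℂ => (w - z0)^m • u w) := heqv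
  have hder_ev : deriv G =ᶠ[nhds z0] deriv (fun w : ℂ => (w - z0)^m • u w) :=
    Filter.EventuallyEq.deriv heqv'
  have hAB : (fun z : ℂ => ((m:ℂ) * u z + (z - z0) * deriv u z) *
        ((z - z0)⁻¹ * (1 - (r:ℂ) + r * Complex.exp z)))
      =ᶠ[nhdsWithin z0 {z | z ≠ z0}]
      (fun z : ℂ => (x:ℂ) * ((r:ℂ) * Complex.exp z) * u z) := by
    have hud_ev := eventually_eventually_nhds.mpr hudiff
    filter_upwards [eventually_nhdsWithin_of_eventually_nhds heqv,
      eventually_nhdsWithin_of_eventually_nhds hder_ev,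
      eventually_nhdsWithin_of_eventually_nhds hudiff,
      eventually_nhdsWithin_of_eventually_nhds hDev,
      self_mem_nhdsWithin] with z hGz hdGz hudz hDz hzne
    have hzne' : z ≠ z0 := hzne
    have hc : z - z0 ≠ 0 := sub_ne_zero.mpr hzne'
    have hk : (z - z0)^(m-1) ≠ 0 := pow_ne_zero _ hc
    have hpow : (z - z0)^m = (z - z0)^(m-1) * (z - z0) := by
      conv_lhs => rw [← Nat.sub_add_cancel hm0]
      rw [pow_succ]
    -- derivative of the model function
    have hψ : HasDerivAt (fun w : ℂ => (w - z0)^m • u w)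
        (((m:ℂ) * (z - z0)^(m-1) * 1) * u z + (z - z0)^m * deriv u z) z := by
      exact (((hasDerivAt_id z).sub_const z0).pow m).mul (hudz.hasDerivAt)
    have hdG : deriv G z = ((m:ℂ) * (z - z0)^(m-1) * 1) * u z + (z - z0)^m * deriv u z := by
      rw [hdGz]
      exact hψ.deriv
    -- the equation from D = 0
    have heqn : (((m:ℂ) * (z - z0)^(m-1) * 1) * u z + (z - z0)^m * deriv u z)
          * (1 - (r:ℂ) + r * Complex.exp z)
        = (x:ℂ) * ((r:ℂ) * Complex.exp z) * ((z - z0)^m * u z) := by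
      have h10 := hDz
      simp only [hD] at h10
      rw [sub_eq_zero] at h10
      rw [hdG] at h10
      rw [hGz] at h10
      simpa [smul_eq_mul] using h10
    have key : ((m:ℂ) * u z + (z - z0) * deriv u z) * (1 - (r:ℂ) + r * Complex.exp z)
        = (x:ℂ) * ((r:ℂ) * Complex.exp z) * ((z - z0) * u z) := by
      apply mul_left_cancel₀ hk
      linear_combination heqn + ((x:ℂ) * ((r:ℂ) * Complex.exp z) * u z
        - (deriv u z) * (1 - (r:ℂ) + r * Complex.exp z)) * hpow
    show ((m:ℂ) * u z + (z - z0) * deriv u z) * ((z - z0)⁻¹ * (1 - (r:ℂ) + r * Complex.exp z))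
        = (x:ℂ) * ((r:ℂ) * Complex.exp z) * u z
    have h12 : ((m:ℂ) * u z + (z - z0) * deriv u z)
          * ((z - z0)⁻¹ * (1 - (r:ℂ) + r * Complex.exp z))
        = (z - z0)⁻¹ * (((m:ℂ) * u z + (z - z0) * deriv u z)
          * (1 - (r:ℂ) + r * Complex.exp z)) := by ring
    rw [h12, key]
    field_simp
  -- identify the limits
  haveI hNB : (nhdsWithin z0 {z : ℂ | z ≠ z0}).NeBot := by
    have h13 : (nhdsWithin z0 {z0}ᶜ).NeBot := inferInstance
    exact h13
  have hlim1 := hcont1.mul hslope'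
  have hEq := tendsto_nhds_unique (hlim1.congr' hAB) hB
  have h11 : ((m:ℂ) - (x:ℂ)) * (u z0 * ((r:ℂ) * Complex.exp z0)) = 0 := by
    linear_combination hEq
  have hm_eq : (m:ℂ) = (x:ℂ) := by
    rcases mul_eq_zero.mp h11 with h | h
    · exact sub_eq_zero.mp h
    · rcases mul_eq_zero.mp h with h' | h'
      · exact absurd h' hu0
      · exact absurd h' hrez0ne
  refine ⟨m, hm0, ?_⟩
  exact_mod_cast hm_eq.symm

end Hard

theorem main_theorem_part_b
    (r l : ℝ) (hr : r ∈ Set.Ioo (0:ℝ) 1) (hl : 0 < l)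
    (hR : 1 < r / (1 - r) * Real.exp l) :
    {p : ℝ × ℝ | 0 < p.1 ∧ 0 < p.2 ∧ ∃ μ : Measure ℝ, IsProbabilityMeasure μ ∧
        ∀ θ : ℝ, θ < l →
          ∫⁻ t, ENNReal.ofReal (Real.exp (θ * t)) ∂μ =
            ENNReal.ofReal ((1 - r + r * Real.exp θ) ^ p.1 * (l / (l - θ)) ^ p.2)} =
      {p : ℝ × ℝ | (∃ n : ℕ, 0 < n ∧ p.1 = (n : ℝ)) ∧ 0 < p.2} := by
  ext p
  simp only [Set.mem_setOf_eq]
  constructor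
  · rintro ⟨hx, hy, μ, hμ, hL⟩
    exact ⟨hard hr hl hR hx hy μ hμ hL, hy⟩
  · rintro ⟨⟨n, hn, hpn⟩, hy⟩
    refine ⟨?_, hy, ?_⟩
    · rw [hpn]; exact_mod_cast hn
    · rw [hpn]; exact construct hr hl n hy
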